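/- Let V and V′ be linear subspaces of the space of diagonal n×n real matrices. Then there exists an orthogonal matrix g ∈ O(n) with gVg⁻¹ = V′ if and only if there exists a permutation matrix P with PVP⁻¹ = V′. -/

import Mathlib

open Matrix

private lemma permOrth (n : ℕ) (σ : Equiv.Perm (Fin n)) :
    σ.permMatrix ℝ * (σ.permMatrix ℝ)ᵀ = 1 := by
  rw [← PEquiv.toMatrix_symm, ← Equiv.toPEquiv_symm, ← PEquiv.toMatrix_trans,
    ← Equiv.toPEquiv_trans]
  simp

private lemma permTrans (n : ℕ) (σ : Equiv.Perm (Fin n)) :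
    (σ.permMatrix ℝ)ᵀ = (σ⁻¹).permMatrix ℝ := by
  rw [← PEquiv.toMatrix_symm, ← Equiv.toPEquiv_symm]
  rfl

private lemma permConj (n : ℕ) (σ : Equiv.Perm (Fin n)) (A : Matrix (Fin n) (Fin n) ℝ) :
    σ.permMatrix ℝ * A * (σ.permMatrix ℝ)⁻¹ = A.submatrix σ σ := by
  have hinv : (σ.permMatrix ℝ)⁻¹ = (σ.permMatrix ℝ)ᵀ :=
    Matrix.inv_eq_right_inv (permOrth n σ)
  rw [hinv, permTrans, PEquiv.toMatrix_toPEquiv_mul,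
    PEquiv.mul_toMatrix_toPEquiv]
  ext i j
  simp only [Matrix.submatrix_apply, id_eq]
  rfl

theorem stmt19 (n : ℕ) (V V' : Submodule ℝ (Matrix (Fin n) (Fin n) ℝ))
    (hV : ∀ A ∈ V, A.IsDiag) (hV' : ∀ A ∈ V', A.IsDiag) :
    (∃ g : Matrix (Fin n) (Fin n) ℝ, g * gᵀ = 1 ∧
        (fun A => g * A * g⁻¹) '' (V : Set (Matrix (Fin n) (Fin n) ℝ)) =
          (V' : Set (Matrix (Fin n) (Fin n) ℝ))) ↔
    (∃ σ : Equiv.Perm (Fin n),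
        (fun A => σ.permMatrix ℝ * A * (σ.permMatrix ℝ)⁻¹) ''
            (V : Set (Matrix (Fin n) (Fin n) ℝ)) =
          (V' : Set (Matrix (Fin n) (Fin n) ℝ))) := by
  constructor
  · rintro ⟨g, hg1, hg2⟩
    have hdet : IsUnit g.det := by
      have := congrArg Matrix.det hg1
      rw [Matrix.det_mul, Matrix.det_transpose, Matrix.det_one] at this
      exact IsUnit.of_mul_eq_one _ this
    have hginv : g⁻¹ * g = 1 := Matrix.nonsing_inv_mul g hdet
    -- find a permutation τ with g (τ i) i ≠ 0 for all i
    obtain ⟨τ, hτ⟩ : ∃ τ : Equiv.Perm (Fin n), ∀ i, g (τ i) i ≠ 0 := by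
      by_contra hc
      push_neg at hc
      have hd0 : g.det = 0 := by
        rw [Matrix.det_apply]
        refine Finset.sum_eq_zero fun σ _ => ?_
        obtain ⟨i, hi⟩ := hc σ
        have h0 : (∏ j, g (σ j) j) = 0 := Finset.prod_eq_zero (Finset.mem_univ i) hi
        rw [h0, smul_zero]
      simp [hd0] at hdet
    refine ⟨τ⁻¹, ?_⟩
    rw [← hg2]
    refine Set.image_congr fun A hA => ?_
    have hAd : A.IsDiag := hV A hA
    set A' := g * A * g⁻¹ with hA'
    have hA'mem : A' ∈ (V' : Set (Matrix (Fin n) (Fin n) ℝ)) := by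
      rw [← hg2]; exact Set.mem_image_of_mem _ hA
    have hA'd : A'.IsDiag := hV' A' hA'mem
    have hgA : g * A = A' * g := by
      rw [hA', Matrix.mul_assoc (g * A) g⁻¹ g, hginv, Matrix.mul_one]
    have key : ∀ i j, g i j ≠ 0 → A' i i = A j j := by
      intro i j hgij
      have hentry := congrFun (congrFun hgA i) j
      have hl : (g * A) i j = g i j * A j j := by
        rw [Matrix.mul_apply]
        refine Finset.sum_eq_single j (fun k _ hk => ?_) (by simp)
        rw [hAd hk, mul_zero]
      have hr : (A' * g) i j = A' i i * g i j := by
        rw [Matrix.mul_apply]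
        refine Finset.sum_eq_single i (fun k _ hk => ?_) (by simp)
        rw [hA'd (Ne.symm hk), zero_mul]
      rw [hl, hr] at hentry
      have := hentry.symm
      rw [mul_comm (A' i i) (g i j)] at this
      exact mul_left_cancel₀ hgij this
    rw [permConj]
    ext i j
    rw [Matrix.submatrix_apply]
    by_cases hij : i = j
    · subst hij
      exact (key i (τ⁻¹ i) (by simpa using hτ (τ⁻¹ i))).symm
    · rw [hAd (fun h => hij (τ⁻¹.injective h)), hA'd hij]
  · rintro ⟨σ, hσ⟩
    exact ⟨σ.permMatrix ℝ, permOrth n σ, hσ⟩
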